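/- Two weight constraint programs are strongly equivalent if and only if they have the same SE-models. -/

import Mathlib

open scoped Classical

inductive Lit where
  | pos : ℕ → Lit
  | neg : ℕ → Lit
deriving DecidableEq

/-- A set of literals is consistent if it contains no complementary pair. -/
def Consistent (X : Set Lit) : Prop :=
  ∀ a : ℕ, ¬ (Lit.pos a ∈ X ∧ Lit.neg a ∈ X)

/-- A rule element: a literal or a literal prefixed with `not`. -/
inductive RElem where
  | pos : Lit → RElem
  | neg : Lit → RElem
deriving DecidableEq

def SatRE (X : Set Lit) : RElem → Prop
  | RElem.pos l => l ∈ X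
  | RElem.neg l => l ∉ X

/-- The literal of a rule element. -/
def reLit : RElem → Lit
  | RElem.pos l => l
  | RElem.neg l => l

/-- A weight constraint L ≤ S ≤ U, where S is a (multi)set of weight assignments
e = w (rule element, weight) and L, U are reals or ±∞. -/
structure WC where
  lb : EReal
  S : Multiset (RElem × ℝ)
  ub : EReal

/-- v(S,X): the sum of the weights of the assignments whose rule element X satisfies. -/
noncomputable def wval (X : Set Lit) (S : Multiset (RElem × ℝ)) : ℝ :=
  ((S.filter fun p => SatRE X p.1).map Prod.snd).sum

def SatWC (X : Set Lit) (C : WC) : Prop :=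
  C.lb ≤ (wval X C.S : EReal) ∧ (wval X C.S : EReal) ≤ C.ub

/-- A WCP rule C0 ← C1,...,Cn. -/
structure WRule where
  head : WC
  body : List WC

abbrev WProg := Set WRule

def isPosRE (p : RElem × ℝ) : Prop := ∃ l : Lit, p.1 = RElem.pos l

/-- In a weight constraint program, heads contain no negative rule elements. -/
def HeadPos (P : WProg) : Prop := ∀ r ∈ P, ∀ p ∈ r.head.S, isPosRE p

def SatWRule (X : Set Lit) (r : WRule) : Prop :=
  (∀ C ∈ r.body, SatWC X C) → SatWC X r.head

def SatWProg (X : Set Lit) (P : WProg) : Prop := ∀ r ∈ P, SatWRule X r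

/-- The reduct (L ≤ S)^X = L − v(S∖S', X) ≤ S', where S' is the positive part of S. -/
noncomputable def RedLS (X : Set Lit) (C : WC) : WC :=
  ⟨C.lb - (wval X (C.S.filter fun p => ¬ isPosRE p) : EReal),
    C.S.filter isPosRE, ⊤⟩

/-- The weight constraint 1 ≤ {l = 1}, representing the literal l. -/
noncomputable def litWC (l : Lit) : WC := ⟨(1 : EReal), {(RElem.pos l, (1 : ℝ))}, ⊤⟩

/-- The weight constraint 1 ≤ {not l = 1}, representing `not l`. -/
noncomputable def notWC (l : Lit) : WC := ⟨(1 : EReal), {(RElem.neg l, (1 : ℝ))}, ⊤⟩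

/-- ⊥, i.e. the weight constraint 1 ≤ {}. -/
noncomputable def botWC : WC := ⟨(1 : EReal), 0, ⊤⟩

/-- The reduct of a WCP rule with respect to X: all rules e ← (L1 ≤ S1)^X,...,(Ln ≤ Sn)^X
for head literals e with X ⊨ e and X ⊨ Si ≤ Ui for all i. -/
noncomputable def WReductRule (X : Set Lit) (r : WRule) : WProg :=
  {r' | ∃ l : Lit, (∃ w : ℝ, (RElem.pos l, w) ∈ r.head.S) ∧ l ∈ X ∧
    (∀ C ∈ r.body, (wval X C.S : EReal) ≤ C.ub) ∧
    r' = ⟨litWC l, r.body.map (RedLS X)⟩}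

noncomputable def WReductProg (X : Set Lit) (P : WProg) : WProg :=
  {r' | ∃ r ∈ P, r' ∈ WReductRule X r}

/-- X is an answer set for P if X ⊨ P and no proper subset of X satisfies P^X. -/
def AnswerSetW (X : Set Lit) (P : WProg) : Prop :=
  Consistent X ∧ SatWProg X P ∧
    ∀ Z : Set Lit, Z ⊂ X → ¬ SatWProg Z (WReductProg X P)

def SEModelW (P : WProg) (X Y : Set Lit) : Prop :=
  Consistent X ∧ Consistent Y ∧ X ⊆ Y ∧ SatWProg Y P ∧ SatWProg X (WReductProg Y P)

def StrongEqW (P Q : WProg) : Prop :=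
  ∀ R : WProg, HeadPos R →
    ∀ Y : Set Lit, AnswerSetW Y (P ∪ R) ↔ AnswerSetW Y (Q ∪ R)

/-- A weight constraint program is ¬-free if classical negation occurs nowhere in it. -/
def WProgNegFree (P : WProg) : Prop :=
  ∀ r ∈ P, (∀ p ∈ r.head.S, ∃ a : ℕ, reLit p.1 = Lit.pos a) ∧
    ∀ C ∈ r.body, ∀ p ∈ C.S, ∃ a : ℕ, reLit p.1 = Lit.pos a

def AtomsOnly (Z : Set Lit) : Prop := ∀ l ∈ Z, ∃ a, l = Lit.pos a

noncomputable def factR (l : Lit) : WRule := ⟨litWC l, []⟩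
noncomputable def impR (l l' : Lit) : WRule := ⟨litWC l, [litWC l']⟩

lemma wval_lit (X : Set Lit) (l : Lit) :
    wval X {(RElem.pos l, (1:ℝ))} = if l ∈ X then 1 else 0 := by
  simp only [wval, Multiset.filter_singleton]
  split_ifs <;> simp_all [SatRE]

lemma satWC_lit (X : Set Lit) (l : Lit) : SatWC X (litWC l) ↔ l ∈ X := by
  unfold SatWC litWC
  simp only [wval_lit]
  split_ifs with h
  · simp [h]
  · simp [h]
lemma satWC_red_lit (Z Y : Set Lit) (l : Lit) :
    SatWC Z (RedLS Y (litWC l)) ↔ l ∈ Z := by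
  unfold SatWC RedLS litWC
  have h1 : Multiset.filter isPosRE {(RElem.pos l, (1:ℝ))} = {(RElem.pos l, (1:ℝ))} := by
    rw [Multiset.filter_singleton, if_pos ⟨l, rfl⟩]
  have h2 : Multiset.filter (fun p => ¬ isPosRE p) {(RElem.pos l, (1:ℝ))} = 0 := by
    rw [Multiset.filter_singleton, if_neg (by simp [isPosRE])]; rfl
  simp only [h1, h2]
  have h3 : wval Y (0 : Multiset (RElem × ℝ)) = 0 := by simp [wval]
  rw [h3, wval_lit]
  split_ifs with h
  · simp [h]
  · simp only [EReal.coe_zero, sub_zero, EReal.coe_zero, le_top, and_true]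
    constructor
    · intro hc; exact absurd hc (by norm_num)
    · intro hc; exact absurd hc h
lemma satWRule_factR (Z : Set Lit) (l : Lit) : SatWRule Z (factR l) ↔ l ∈ Z := by
  unfold SatWRule factR
  simp [satWC_lit]

lemma mem_reduct_factR (Y : Set Lit) (l : Lit) (r' : WRule) :
    r' ∈ WReductRule Y (factR l) ↔ l ∈ Y ∧ r' = factR l := by
  unfold WReductRule factR
  simp only [Set.mem_setOf_eq, litWC, Multiset.mem_singleton, Prod.mk.injEq,
    List.not_mem_nil, false_implies, implies_true, true_and, List.map_nil]
  constructor
  · rintro ⟨l0, ⟨w, hw1, hw2⟩, hl0, h'⟩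
    cases hw1; exact ⟨hl0, h'⟩
  · rintro ⟨hl, h'⟩
    exact ⟨l, ⟨1, rfl, rfl⟩, hl, h'⟩

lemma mem_reduct_impR (Y : Set Lit) (l l' : Lit) (r' : WRule) :
    r' ∈ WReductRule Y (impR l l') ↔ l ∈ Y ∧ r' = ⟨litWC l, [RedLS Y (litWC l')]⟩ := by
  unfold WReductRule impR
  simp only [Set.mem_setOf_eq, litWC, Multiset.mem_singleton, Prod.mk.injEq,
    List.mem_singleton, List.map_cons, List.map_nil, forall_eq, le_top, true_and]
  constructor
  · rintro ⟨l0, ⟨w, hw1, hw2⟩, hl0, h'⟩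
    cases hw1; exact ⟨hl0, h'⟩
  · rintro ⟨hl, h'⟩
    exact ⟨l, ⟨1, rfl, rfl⟩, hl, h'⟩

lemma sat_selfreduct (Y : Set Lit) (P : WProg) : SatWProg Y (WReductProg Y P) := by
  rintro r' ⟨r, hr, l, hw, hl, hub, rfl⟩
  intro _
  exact (satWC_lit Y l).mpr hl

lemma reduct_union (Y : Set Lit) (P R : WProg) :
    WReductProg Y (P ∪ R) = WReductProg Y P ∪ WReductProg Y R := by
  ext r'
  constructor
  · rintro ⟨r, (hr | hr), hm⟩
    · exact Or.inl ⟨r, hr, hm⟩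
    · exact Or.inr ⟨r, hr, hm⟩
  · rintro (⟨r, hr, hm⟩ | ⟨r, hr, hm⟩)
    · exact ⟨r, Or.inl hr, hm⟩
    · exact ⟨r, Or.inr hr, hm⟩

lemma satWProg_union (Z : Set Lit) (P R : WProg) :
    SatWProg Z (P ∪ R) ↔ SatWProg Z P ∧ SatWProg Z R := by
  constructor
  · intro h; exact ⟨fun r hr => h r (Or.inl hr), fun r hr => h r (Or.inr hr)⟩
  · rintro ⟨h1, h2⟩ r (hr | hr); exacts [h1 r hr, h2 r hr]

lemma consistent_subset {Z Y : Set Lit} (hY : Consistent Y) (h : Z ⊆ Y) : Consistent Z :=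
  fun a ⟨h1, h2⟩ => hY a ⟨h h1, h h2⟩
def setR1 (W : Set Lit) : WProg := {r | ∃ l ∈ W, r = factR l}

def setR2 (X Y : Set Lit) : WProg := {r | ∃ l ∈ Y \ X, ∃ l' ∈ Y \ X, r = impR l l'}

lemma headPos_litWC_rule (r : WRule) (l : Lit) (h : r.head = litWC l) :
    ∀ p ∈ r.head.S, isPosRE p := by
  rw [h]; intro p hp
  rw [litWC] at hp
  simp only [Multiset.mem_singleton] at hp
  exact hp ▸ ⟨l, rfl⟩

lemma headPos_R1 (W : Set Lit) : HeadPos (setR1 W) := by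
  rintro r ⟨l, _, rfl⟩; exact headPos_litWC_rule _ l rfl

lemma headPos_R2 (X Y : Set Lit) : HeadPos (setR2 X Y) := by
  rintro r ⟨l, _, l', _, rfl⟩; exact headPos_litWC_rule _ l rfl

lemma headPos_union {P R : WProg} (hP : HeadPos P) (hR : HeadPos R) :
    HeadPos (P ∪ R) := by
  rintro r (hr | hr); exacts [hP r hr, hR r hr]

lemma sat_R1 (Z W : Set Lit) : SatWProg Z (setR1 W) ↔ W ⊆ Z := by
  constructor
  · intro h l hl
    exact (satWRule_factR Z l).mp (h (factR l) ⟨l, hl, rfl⟩)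
  · rintro h r ⟨l, hl, rfl⟩
    exact (satWRule_factR Z l).mpr (h hl)

lemma sat_R2 (Y X : Set Lit) : SatWProg Y (setR2 X Y) := by
  rintro r ⟨l, hl, l', hl', rfl⟩
  intro _
  exact (satWC_lit Y l).mpr hl.1

lemma sat_reduct_R1 (Z Y W : Set Lit) (hWY : W ⊆ Y) :
    SatWProg Z (WReductProg Y (setR1 W)) ↔ W ⊆ Z := by
  constructor
  · intro h l hl
    have hm : factR l ∈ WReductProg Y (setR1 W) :=
      ⟨factR l, ⟨l, hl, rfl⟩, (mem_reduct_factR Y l _).mpr ⟨hWY hl, rfl⟩⟩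
    exact (satWRule_factR Z l).mp (h _ hm)
  · rintro h r' ⟨r, ⟨l, hl, rfl⟩, hm⟩
    obtain ⟨-, rfl⟩ := (mem_reduct_factR Y l _).mp hm
    exact (satWRule_factR Z l).mpr (h hl)

lemma sat_reduct_R2 (Z Y X : Set Lit) :
    SatWProg Z (WReductProg Y (setR2 X Y)) ↔
      ∀ l ∈ Y \ X, ∀ l' ∈ Y \ X, l' ∈ Z → l ∈ Z := by
  constructor
  · intro h l hl l' hl' hl'Z
    have hm : (⟨litWC l, [RedLS Y (litWC l')]⟩ : WRule) ∈ WReductProg Y (setR2 X Y) :=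
      ⟨impR l l', ⟨l, hl, l', hl', rfl⟩, (mem_reduct_impR Y l l' _).mpr ⟨hl.1, rfl⟩⟩
    have := h _ hm
    unfold SatWRule at this
    simp only [List.mem_singleton, forall_eq] at this
    exact (satWC_lit Z l).mp (this ((satWC_red_lit Z Y l').mpr hl'Z))
  · rintro h r' ⟨r, ⟨l, hl, l', hl', rfl⟩, hm⟩
    obtain ⟨-, rfl⟩ := (mem_reduct_impR Y l l' _).mp hm
    intro hb
    simp only [List.mem_singleton, forall_eq] at hb
    exact (satWC_lit Z l).mpr (h l hl l' hl' ((satWC_red_lit Z Y l').mp hb))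
lemma answer_imp (P Q R : WProg) (h : ∀ X Y : Set Lit, SEModelW P X Y ↔ SEModelW Q X Y)
    (Y : Set Lit) : AnswerSetW Y (P ∪ R) → AnswerSetW Y (Q ∪ R) := by
  rintro ⟨hcY, hsat, hmin⟩
  rw [satWProg_union] at hsat
  have hYQ : SatWProg Y Q :=
    ((h Y Y).mp ⟨hcY, hcY, subset_rfl, hsat.1, sat_selfreduct Y P⟩).2.2.2.1
  refine ⟨hcY, (satWProg_union _ _ _).mpr ⟨hYQ, hsat.2⟩, ?_⟩
  intro Z hZ hZsat
  rw [reduct_union, satWProg_union] at hZsat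
  have hse : SEModelW P Z Y :=
    (h Z Y).mpr ⟨consistent_subset hcY hZ.1, hcY, hZ.1, hYQ, hZsat.1⟩
  refine hmin Z hZ ?_
  rw [reduct_union, satWProg_union]
  exact ⟨hse.2.2.2.2, hZsat.2⟩

lemma se_transfer (P Q : WProg) (h : StrongEqW P Q) (X Y : Set Lit) :
    SEModelW P X Y → SEModelW Q X Y := by
  rintro ⟨hcX, hcY, hXY, hYP, hXPY⟩
  have hYQ : SatWProg Y Q := by
    by_contra hYQ
    have hA : AnswerSetW Y (P ∪ setR1 Y) := by
      refine ⟨hcY, (satWProg_union _ _ _).mpr ⟨hYP, (sat_R1 Y Y).mpr subset_rfl⟩, ?_⟩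
      intro Z hZ hZsat
      rw [reduct_union, satWProg_union] at hZsat
      exact hZ.2 ((sat_reduct_R1 Z Y Y subset_rfl).mp hZsat.2)
    have hB := (h (setR1 Y) (headPos_R1 Y) Y).mp hA
    exact hYQ (((satWProg_union _ _ _).mp hB.2.1).1)
  have hXQY : SatWProg X (WReductProg Y Q) := by
    by_contra hXQY
    have hne : X ≠ Y := by
      rintro rfl; exact hXQY (sat_selfreduct X Q)
    have hXsY : X ⊂ Y := hXY.ssubset_of_ne hne
    set R : WProg := setR1 X ∪ setR2 X Y with hR
    have hA : AnswerSetW Y (Q ∪ R) := by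
      refine ⟨hcY, ?_, ?_⟩
      · rw [satWProg_union, satWProg_union]
        exact ⟨hYQ, (sat_R1 Y X).mpr hXY, sat_R2 Y X⟩
      · intro Z hZ hZsat
        rw [reduct_union, reduct_union, satWProg_union, satWProg_union] at hZsat
        obtain ⟨hZQ, hZ1, hZ2⟩ := hZsat
        have hXZ : X ⊆ Z := (sat_reduct_R1 Z Y X hXY).mp hZ1
        rw [sat_reduct_R2] at hZ2
        by_cases hcase : ∃ l', l' ∈ Z ∧ l' ∈ Y \ X
        · obtain ⟨l', hl'Z, hl'⟩ := hcase
          have hYZ : Y ⊆ Z := by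
            intro l hl
            by_cases hlX : l ∈ X
            · exact hXZ hlX
            · exact hZ2 l ⟨hl, hlX⟩ l' hl' hl'Z
          exact hZ.2 hYZ
        · have hZX : Z = X := by
            apply Set.Subset.antisymm _ hXZ
            intro l hl
            by_contra hlX
            exact hcase ⟨l, hl, hZ.1 hl, hlX⟩
          rw [hZX] at hZQ
          exact hXQY hZQ
    have hB := (h R (headPos_union (headPos_R1 X) (headPos_R2 X Y)) Y).mpr hA
    refine hB.2.2 X hXsY ?_
    rw [reduct_union, reduct_union, satWProg_union, satWProg_union]
    refine ⟨hXPY, (sat_reduct_R1 X Y X hXY).mpr subset_rfl, ?_⟩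
    rw [sat_reduct_R2]
    intro l hl l' hl' hl'X
    exact absurd hl'X hl'.2
  exact ⟨hcX, hcY, hXY, hYQ, hXQY⟩

/-- weight constraint programs are strongly equivalent iff they have
the same SE-models. -/
theorem stmt13 (P Q : WProg) (hP : HeadPos P) (hQ : HeadPos Q) :
    StrongEqW P Q ↔ ∀ X Y : Set Lit, SEModelW P X Y ↔ SEModelW Q X Y := by
  constructor
  · intro h X Y
    have h' : StrongEqW Q P := fun R hR Y => (h R hR Y).symm
    exact ⟨se_transfer P Q h X Y, se_transfer Q P h' X Y⟩
  · intro h R hR Y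
    exact ⟨answer_imp P Q R h Y, answer_imp Q P R (fun X Y => (h X Y).symm) Y⟩
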